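/- Let F be a free group of finite rank g, and suppose F is the internal free product of subgroups G₁ and G₂ (i.e., the natural homomorphism from the abstract free product G₁ ∗ G₂ to F induced by the inclusions is an isomorphism). Then there exist a free basis {y₁, y₂, …, y_g} of F and an integer g₁ with 0 ≤ g₁ ≤ g such that {y₁, …, y_{g₁}} is a free basis of G₁ and {y_{g₁+1}, …, y_g} is a free basis of G₂. -/

import Mathlib

open scoped Monoid.Coprod

/-- `G` is the internal free product of its subgroups `G₁` and `G₂` if the natural
homomorphism from the abstract free product `G₁ ∗ G₂` to `G` induced by the inclusion
maps is an isomorphism (equivalently, bijective). -/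
def IsInternalFreeProduct {G : Type*} [Group G] (G₁ G₂ : Subgroup G) : Prop :=
  Function.Bijective (Monoid.Coprod.lift G₁.subtype G₂.subtype)

/-- A subset `S` of a subgroup `H` of `G` is a free basis of `H` if `S ⊆ H` and the
homomorphism from the free group on `S` to `H` induced by the inclusion is an isomorphism
(equivalently, bijective). -/
def IsFreeBasisOfSubgroup {G : Type*} [Group G] (S : Set G) (H : Subgroup G) : Prop :=
  ∃ hS : S ⊆ (H : Set G),
    Function.Bijective (FreeGroup.lift (fun s : S => (⟨s.1, hS s.2⟩ : H)))

section Aux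

variable {G : Type} [Group G] {H : Subgroup G} {A : Type} (e : FreeGroup A ≃* H)

/-- If a subgroup `H` is isomorphic to `FreeGroup A` via `e`, then the image in `G` of the
canonical generators forms a free basis of `H`. -/
theorem isFreeBasisOfSubgroup_range :
    IsFreeBasisOfSubgroup (Set.range fun a : A => ((e (FreeGroup.of a) : H) : G)) H := by
  set f : A → G := fun a => ((e (FreeGroup.of a) : H) : G) with hf
  have hS : Set.range f ⊆ (H : Set G) := by
    rintro x ⟨a, rfl⟩; exact (e (FreeGroup.of a)).2
  refine ⟨hS, ?_⟩
  have hβinj : Function.Injective fun a : A => (⟨f a, ⟨a, rfl⟩⟩ : Set.range f) := by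
    intro a b hab
    have h1 : f a = f b := by simpa using congrArg Subtype.val hab
    have h2 : e (FreeGroup.of a) = e (FreeGroup.of b) := Subtype.coe_injective h1
    exact FreeGroup.of_injective (e.injective h2)
  have hβsurj : Function.Surjective fun a : A => (⟨f a, ⟨a, rfl⟩⟩ : Set.range f) := by
    rintro ⟨x, a, rfl⟩; exact ⟨a, rfl⟩
  set eβ : A ≃ Set.range f := Equiv.ofBijective _ ⟨hβinj, hβsurj⟩ with heβ
  have key : FreeGroup.lift (fun s : Set.range f => (⟨s.1, hS s.2⟩ : H)) =
      e.toMonoidHom.comp (FreeGroup.freeGroupCongr eβ).symm.toMonoidHom := by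
    ext s
    simp only [MonoidHom.coe_comp, Function.comp_apply, FreeGroup.lift_apply_of,
      MulEquiv.coe_toMonoidHom, FreeGroup.freeGroupCongr_symm, FreeGroup.freeGroupCongr_apply,
      FreeGroup.map.of]
    have h3 : eβ (eβ.symm s) = s := eβ.apply_symm_apply s
    calc (s : G) = ((eβ (eβ.symm s) : Set.range f) : G) := by rw [h3]
    _ = f (eβ.symm s) := rfl
    _ = ((e (FreeGroup.of (eβ.symm s)) : H) : G) := rfl
  rw [key]
  exact e.bijective.comp (FreeGroup.freeGroupCongr eβ).symm.bijective

end Aux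

/-- If a free group of finite rank `g` is the internal free product of subgroups `G₁` and
`G₂`, then there are a free basis `y₁, …, y_g` of the free group and `0 ≤ g₁ ≤ g` such that
`{y₁, …, y_{g₁}}` is a free basis of `G₁` and `{y_{g₁+1}, …, y_g}` is a free basis of `G₂`. -/
theorem exists_compatible_basis_of_internalFreeProduct (g : ℕ)
    (G₁ G₂ : Subgroup (FreeGroup (Fin g))) (h : IsInternalFreeProduct G₁ G₂) :
    ∃ (y : Fin g → FreeGroup (Fin g)) (g₁ : ℕ), g₁ ≤ g ∧
      Function.Bijective (FreeGroup.lift y) ∧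
      IsFreeBasisOfSubgroup (y '' {i : Fin g | (i : ℕ) < g₁}) G₁ ∧
      IsFreeBasisOfSubgroup (y '' {i : Fin g | g₁ ≤ (i : ℕ)}) G₂ := by
  classical
  set A := IsFreeGroup.Generators G₁
  set B := IsFreeGroup.Generators G₂
  set e₁ : FreeGroup A ≃* G₁ := IsFreeGroup.mulEquiv G₁
  set e₂ : FreeGroup B ≃* G₂ := IsFreeGroup.mulEquiv G₂
  -- the map from the free group on A ⊕ B to the coproduct
  set M : FreeGroup (A ⊕ B) →* (G₁ ∗ G₂) := FreeGroup.lift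
    (Sum.elim (fun a => Monoid.Coprod.inl (e₁ (FreeGroup.of a)))
              (fun b => Monoid.Coprod.inr (e₂ (FreeGroup.of b)))) with hM
  set N : (G₁ ∗ G₂) →* FreeGroup (A ⊕ B) := Monoid.Coprod.lift
    ((FreeGroup.lift (fun a : A => FreeGroup.of (Sum.inl a : A ⊕ B))).comp e₁.symm.toMonoidHom)
    ((FreeGroup.lift (fun b : B => FreeGroup.of (Sum.inr b : A ⊕ B))).comp e₂.symm.toMonoidHom)
    with hN
  have hNM : N.comp M = MonoidHom.id _ := by
    ext x
    rcases x with a | b <;> simp [hM, hN]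
  have hMN : M.comp N = MonoidHom.id _ := by
    apply Monoid.Coprod.hom_ext
    · have key : ((M.comp N).comp Monoid.Coprod.inl).comp e₁.toMonoidHom =
          ((MonoidHom.id _).comp Monoid.Coprod.inl).comp e₁.toMonoidHom := by
        ext a; simp [hM, hN]
      ext x
      obtain ⟨z, rfl⟩ := e₁.surjective x
      exact DFunLike.congr_fun key z
    · have key : ((M.comp N).comp Monoid.Coprod.inr).comp e₂.toMonoidHom =
          ((MonoidHom.id _).comp Monoid.Coprod.inr).comp e₂.toMonoidHom := by
        ext b; simp [hM, hN]
      ext x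
      obtain ⟨z, rfl⟩ := e₂.surjective x
      exact DFunLike.congr_fun key z
  set EM : FreeGroup (A ⊕ B) ≃* (G₁ ∗ G₂) := MonoidHom.toMulEquiv M N hNM hMN with hEM
  set EL : (G₁ ∗ G₂) ≃* FreeGroup (Fin g) :=
    MulEquiv.ofBijective (Monoid.Coprod.lift G₁.subtype G₂.subtype) h with hEL
  set Ψ : FreeGroup (A ⊕ B) ≃* FreeGroup (Fin g) := EM.trans EL with hΨ
  -- values of Ψ on generators
  have hΨ₁ : ∀ a : A, Ψ (FreeGroup.of (Sum.inl a)) = ((e₁ (FreeGroup.of a) : G₁) : FreeGroup (Fin g)) := by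
    intro a
    simp [hΨ, hEM, hEL, hM, MonoidHom.toMulEquiv, MulEquiv.ofBijective]
    exact Monoid.Coprod.lift_apply_inl G₁.subtype G₂.subtype _
  have hΨ₂ : ∀ b : B, Ψ (FreeGroup.of (Sum.inr b)) = ((e₂ (FreeGroup.of b) : G₂) : FreeGroup (Fin g)) := by
    intro b
    simp [hΨ, hEM, hEL, hM, MonoidHom.toMulEquiv, MulEquiv.ofBijective]
    exact Monoid.Coprod.lift_apply_inr G₁.subtype G₂.subtype _
  -- rank considerations
  set e₀ : (A ⊕ B) ≃ Fin g := Equiv.ofFreeGroupEquiv Ψ with he₀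
  haveI : Finite (A ⊕ B) := Finite.of_equiv _ e₀.symm
  haveI : Finite A := Finite.sum_left B
  haveI : Finite B := Finite.sum_right A
  letI : Fintype A := Fintype.ofFinite A
  letI : Fintype B := Fintype.ofFinite B
  set g₁ := Fintype.card A with hg₁
  have hcard : Fintype.card A + Fintype.card B = g := by
    have := Fintype.card_congr e₀
    simpa using this
  set e : (A ⊕ B) ≃ Fin g :=
    (Equiv.sumCongr (Fintype.equivFin A) (Fintype.equivFin B)).trans
      ((finSumFinEquiv).trans (finCongr hcard)) with he
  have heA : ∀ a : A, ((e (Sum.inl a) : Fin g) : ℕ) < g₁ := by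
    intro a
    simp only [he, Equiv.trans_apply, Equiv.sumCongr_apply, Sum.map_inl,
      finSumFinEquiv_apply_left, finCongr_apply]
    simp only [Fin.coe_castAdd, hg₁]
    exact (Fintype.equivFin A a).2
  have heB : ∀ b : B, g₁ ≤ ((e (Sum.inr b) : Fin g) : ℕ) := by
    intro b
    simp only [he, Equiv.trans_apply, Equiv.sumCongr_apply, Sum.map_inr,
      finSumFinEquiv_apply_right, finCongr_apply]
    simp [Fin.natAdd]
    omega
  set y : Fin g → FreeGroup (Fin g) := fun i => Ψ (FreeGroup.of (e.symm i)) with hy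
  refine ⟨y, g₁, ?_, ?_, ?_, ?_⟩
  · omega
  · have key : FreeGroup.lift y =
        Ψ.toMonoidHom.comp (FreeGroup.freeGroupCongr e).symm.toMonoidHom := by
      ext i
      simp [hy]
    rw [key]
    exact Ψ.bijective.comp (FreeGroup.freeGroupCongr e).symm.bijective
  · have himg : y '' {i : Fin g | (i : ℕ) < g₁} =
        Set.range fun a : A => ((e₁ (FreeGroup.of a) : G₁) : FreeGroup (Fin g)) := by
      ext x
      constructor
      · rintro ⟨i, hi, rfl⟩
        simp only [Set.mem_setOf_eq] at hi
        rcases hsymm : e.symm i with a | b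
        · refine ⟨a, ?_⟩
          simp only [hy]
          rw [hsymm]
          exact (hΨ₁ a).symm
        · exfalso
          have h4 : i = e (Sum.inr b) := by rw [← hsymm, e.apply_symm_apply]
          have h5 := heB b
          rw [← h4] at h5
          omega
      · rintro ⟨a, rfl⟩
        refine ⟨e (Sum.inl a), heA a, ?_⟩
        simp only [hy]
        rw [e.symm_apply_apply, hΨ₁ a]
    rw [himg]
    exact isFreeBasisOfSubgroup_range e₁
  · have himg : y '' {i : Fin g | g₁ ≤ (i : ℕ)} =
        Set.range fun b : B => ((e₂ (FreeGroup.of b) : G₂) : FreeGroup (Fin g)) := by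
      ext x
      constructor
      · rintro ⟨i, hi, rfl⟩
        simp only [Set.mem_setOf_eq] at hi
        rcases hsymm : e.symm i with a | b
        · exfalso
          have h4 : i = e (Sum.inl a) := by rw [← hsymm, e.apply_symm_apply]
          have h5 := heA a
          rw [← h4] at h5
          omega
        · refine ⟨b, ?_⟩
          simp only [hy]
          rw [hsymm]
          exact (hΨ₂ b).symm
      · rintro ⟨b, rfl⟩
        refine ⟨e (Sum.inr b), heB b, ?_⟩
        simp only [hy]
        rw [e.symm_apply_apply, hΨ₂ b]
    rw [himg]
    exact isFreeBasisOfSubgroup_range e₂
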